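/- Let (M, x₀, μ) be a smooth partial monoid: μ : M × M → M is a smooth map defined on a neighbourhood of (x₀,x₀), associative where defined, with μ(x,x₀) = μ(x₀,x) = x. Then M is group-like near x₀: there exists a smooth map s : V → M on a neighbourhood V of x₀ with μ(s(x),x) = μ(x,s(x)) = x₀ for all x ∈ V. -/

import Mathlib

open Set Filter Function
open scoped Topology Manifold


/-- Let `(M, x₀, μ)` be a smooth partial monoid: `μ` is smooth on a
neighbourhood `U` of `(x₀,x₀)`, unital at `x₀` and associative where defined.
Then `M` is group-like near `x₀`: there is a smooth map `s` on a
neighbourhood `V` of `x₀` with `μ(s(x),x) = μ(x,s(x)) = x₀` for `x ∈ V`. -/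
theorem stmt_19 {E : Type*} [NormedAddCommGroup E] [NormedSpace ℝ E]
    [FiniteDimensional ℝ E]
    {H : Type*} [TopologicalSpace H] (I : ModelWithCorners ℝ E H)
    [I.Boundaryless]
    {M : Type*} [TopologicalSpace M] [ChartedSpace H M]
    [IsManifold I (⊤ : ℕ∞) M]
    (x₀ : M) (U : Set (M × M)) (hU : U ∈ nhds (x₀, x₀))
    (μ : M × M → M)
    (hμ : ContMDiffOn (I.prod I) I (⊤ : ℕ∞) μ U)
    (hunitl : ∀ x : M, (x₀, x) ∈ U → μ (x₀, x) = x)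
    (hunitr : ∀ x : M, (x, x₀) ∈ U → μ (x, x₀) = x)
    (hassoc : ∀ x y z : M, (x, y) ∈ U → (y, z) ∈ U →
      (μ (x, y), z) ∈ U → (x, μ (y, z)) ∈ U →
      μ (μ (x, y), z) = μ (x, μ (y, z))) :
    ∃ V ∈ nhds x₀, ∃ s : M → M, ContMDiffOn I I (⊤ : ℕ∞) s V ∧
      ∀ x ∈ V, (s x, x) ∈ U ∧ (x, s x) ∈ U ∧
        μ (s x, x) = x₀ ∧ μ (x, s x) = x₀ := by
  have hx₀U : (x₀, x₀) ∈ U := mem_of_mem_nhds hU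
  have hμ₀ : μ (x₀, x₀) = x₀ := hunitl x₀ hx₀U
  set φ := extChartAt I x₀ with hφdef
  set e₀ : E := φ x₀ with he₀def
  set T : Set E := φ.target with hTdef
  have hTopen : IsOpen T := isOpen_extChartAt_target x₀
  have he₀T : e₀ ∈ T := mem_extChartAt_target x₀
  set f : E × E → E := fun p => φ (μ (φ.symm p.1, φ.symm p.2)) with hfdef
  have hfat : ∀ p : E × E, p.1 ∈ T → p.2 ∈ T → (φ.symm p.1, φ.symm p.2) ∈ interior U →
      μ (φ.symm p.1, φ.symm p.2) ∈ (chartAt H x₀).source → ContDiffAt ℝ (⊤ : ℕ∞) f p := by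
    intro p h1 h2 h3 h4
    rw [← contMDiffAt_iff_contDiffAt]
    have hfst : ContMDiffAt 𝓘(ℝ, E × E) 𝓘(ℝ, E) (⊤ : ℕ∞) (Prod.fst : E × E → E) p :=
      contMDiffAt_iff_contDiffAt.2 contDiffAt_fst
    have hsnd : ContMDiffAt 𝓘(ℝ, E × E) 𝓘(ℝ, E) (⊤ : ℕ∞) (Prod.snd : E × E → E) p :=
      contMDiffAt_iff_contDiffAt.2 contDiffAt_snd
    have hψ1 : ContMDiffAt 𝓘(ℝ, E) I (⊤ : ℕ∞) φ.symm p.1 :=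
      (contMDiffOn_extChartAt_symm x₀).contMDiffAt (hTopen.mem_nhds h1)
    have hψ2 : ContMDiffAt 𝓘(ℝ, E) I (⊤ : ℕ∞) φ.symm p.2 :=
      (contMDiffOn_extChartAt_symm x₀).contMDiffAt (hTopen.mem_nhds h2)
    exact (contMDiffAt_extChartAt' h4).comp p
      ((hμ.contMDiffAt (mem_interior_iff_mem_nhds.1 h3)).comp p
        ((hψ1.comp p hfst).prodMk (hψ2.comp p hsnd)))
  -- the open set S where f is smooth
  have hψcont : ContinuousOn φ.symm T := continuousOn_extChartAt_symm x₀
  have hΨcont : ContinuousOn (fun p : E × E => (φ.symm p.1, φ.symm p.2)) (T ×ˢ T) :=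
    ((hψcont.comp continuousOn_fst (fun p hp => hp.1)).prodMk
      (hψcont.comp continuousOn_snd (fun p hp => hp.2)))
  set S₁ : Set (E × E) :=
    (T ×ˢ T) ∩ (fun p : E × E => (φ.symm p.1, φ.symm p.2)) ⁻¹' interior U with hS₁def
  have hS₁open : IsOpen S₁ :=
    hΨcont.isOpen_inter_preimage (hTopen.prod hTopen) isOpen_interior
  set S : Set (E × E) :=
    S₁ ∩ (fun p : E × E => μ (φ.symm p.1, φ.symm p.2)) ⁻¹' (chartAt H x₀).source with hSdef
  have hSopen : IsOpen S := by
    refine ContinuousOn.isOpen_inter_preimage ?_ hS₁open (chartAt H x₀).open_source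
    exact (hμ.continuousOn.comp (hΨcont.mono (fun p hp => hp.1))
      (fun p hp => interior_subset hp.2))
  have hμ₀' : μ (x₀, x₀) = x₀ := hμ₀
  have hψe₀ : φ.symm e₀ = x₀ := extChartAt_to_inv x₀
  have hq₀S : ((e₀, e₀) : E × E) ∈ S := by
    refine ⟨⟨⟨he₀T, he₀T⟩, ?_⟩, ?_⟩
    · show (φ.symm e₀, φ.symm e₀) ∈ interior U
      rw [hψe₀]
      exact mem_interior_iff_mem_nhds.2 hU
    · show μ (φ.symm e₀, φ.symm e₀) ∈ (chartAt H x₀).source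
      rw [hψe₀, hμ₀]
      exact mem_chart_source H x₀
  have hSmem : ∀ p ∈ S, ContDiffAt ℝ (⊤ : ℕ∞) f p := by
    rintro p ⟨⟨⟨h1, h2⟩, h3⟩, h4⟩
    exact hfat p h1 h2 h3 h4
  have hfS : ContDiffOn ℝ (⊤ : ℕ∞) f S := fun p hp => (hSmem p hp).contDiffWithinAt
  have hSnhds : S ∈ 𝓝 ((e₀, e₀) : E × E) := hSopen.mem_nhds hq₀S
  -- F and its derivative
  set F : E × E → E × E := fun p => (p.1, f p) with hFdef
  have hFS : ContDiffOn ℝ (⊤ : ℕ∞) F S := (contDiff_fst.contDiffOn).prodMk hfS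
  have hf00 : f (e₀, e₀) = e₀ := by
    show φ (μ (φ.symm e₀, φ.symm e₀)) = e₀
    rw [hψe₀, hμ₀]
  have hF00 : F (e₀, e₀) = (e₀, e₀) := by simp [hFdef, hf00]
  -- eventual identities f (u, e₀) = u and f (e₀, v) = v
  have hψat : ContinuousAt φ.symm e₀ := continuousAt_extChartAt_symm x₀
  have hrect : ∀ᶠ u in 𝓝 e₀, f (u, e₀) = u := by
    have h1 : ∀ᶠ u in 𝓝 e₀, (φ.symm u, x₀) ∈ U := by
      have h0 : ContinuousAt (fun u => (φ.symm u, x₀)) e₀ :=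
        hψat.prodMk continuousAt_const
      have h0' := h0.tendsto
      rw [hψe₀] at h0'
      exact h0' hU
    filter_upwards [h1, hTopen.mem_nhds he₀T] with u h1u h2u
    show φ (μ (φ.symm u, φ.symm e₀)) = u
    rw [hψe₀, hunitr _ h1u]
    exact φ.right_inv h2u
  have hlect : ∀ᶠ v in 𝓝 e₀, f (e₀, v) = v := by
    have h1 : ∀ᶠ v in 𝓝 e₀, (x₀, φ.symm v) ∈ U := by
      have h0 : ContinuousAt (fun v => (x₀, φ.symm v)) e₀ :=
        continuousAt_const.prodMk hψat
      have h0' := h0.tendsto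
      rw [hψe₀] at h0'
      exact h0' hU
    filter_upwards [h1, hTopen.mem_nhds he₀T] with v h1v h2v
    show φ (μ (φ.symm e₀, φ.symm v)) = v
    rw [hψe₀, hunitl _ h1v]
    exact φ.right_inv h2v
  -- the derivative of f at (e₀, e₀) is fst + snd
  have hfat₀ : ContDiffAt ℝ (⊤ : ℕ∞) f (e₀, e₀) := hfS.contDiffAt hSnhds
  have hdf : DifferentiableAt ℝ f (e₀, e₀) := hfat₀.differentiableAt (by simp)
  set L : E × E →L[ℝ] E := fderiv ℝ f (e₀, e₀) with hLdef
  have hL : HasFDerivAt f L (e₀, e₀) := hdf.hasFDerivAt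
  have hinl : L.comp (ContinuousLinearMap.inl ℝ E E) = ContinuousLinearMap.id ℝ E := by
    have hcompl : HasFDerivAt (fun u : E => (u, e₀)) (ContinuousLinearMap.inl ℝ E E) e₀ :=
      hasFDerivAt_prodMk_left e₀ e₀
    have h1 : HasFDerivAt (fun u : E => f (u, e₀)) (L.comp (ContinuousLinearMap.inl ℝ E E)) e₀ :=
      HasFDerivAt.comp (f := fun u : E => (u, e₀)) e₀ hL hcompl
    have h2 : HasFDerivAt (fun u : E => f (u, e₀)) (ContinuousLinearMap.id ℝ E) e₀ :=
      (hasFDerivAt_id e₀).congr_of_eventuallyEq (hrect.mono (fun u hu => hu))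
    exact h1.unique h2
  have hinr : L.comp (ContinuousLinearMap.inr ℝ E E) = ContinuousLinearMap.id ℝ E := by
    have hcompr : HasFDerivAt (fun v : E => (e₀, v)) (ContinuousLinearMap.inr ℝ E E) e₀ :=
      hasFDerivAt_prodMk_right e₀ e₀
    have h1 : HasFDerivAt (fun v : E => f (e₀, v)) (L.comp (ContinuousLinearMap.inr ℝ E E)) e₀ :=
      HasFDerivAt.comp (f := fun v : E => (e₀, v)) e₀ hL hcompr
    have h2 : HasFDerivAt (fun v : E => f (e₀, v)) (ContinuousLinearMap.id ℝ E) e₀ :=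
      (hasFDerivAt_id e₀).congr_of_eventuallyEq (hlect.mono (fun u hu => hu))
    exact h1.unique h2
  have hLeq : L = ContinuousLinearMap.fst ℝ E E + ContinuousLinearMap.snd ℝ E E := by
    ext v
    · simpa using congrArg (fun (T : E →L[ℝ] E) => T v) hinl
    · simpa using congrArg (fun (T : E →L[ℝ] E) => T v) hinr
  -- the equivalence F' = derivative of F at (e₀,e₀)
  set F' : (E × E) ≃L[ℝ] (E × E) := ContinuousLinearEquiv.equivOfInverse
      ((ContinuousLinearMap.fst ℝ E E).prod
        (ContinuousLinearMap.fst ℝ E E + ContinuousLinearMap.snd ℝ E E))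
      ((ContinuousLinearMap.fst ℝ E E).prod
        (ContinuousLinearMap.snd ℝ E E - ContinuousLinearMap.fst ℝ E E))
      (fun p => by simp) (fun p => by simp) with hF'def
  have hFd : HasFDerivAt F ((ContinuousLinearMap.fst ℝ E E).prod L) (e₀, e₀) :=
    hasFDerivAt_fst.prodMk hL
  have hFd' : HasFDerivAt F ((F' : (E × E) ≃L[ℝ] E × E) : (E × E) →L[ℝ] E × E) (e₀, e₀) := by
    rw [hLeq] at hFd
    exact hFd
  have hFat₀ : ContDiffAt ℝ (⊤ : ℕ∞) F (e₀, e₀) := hFS.contDiffAt hSnhds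
  have hstrict : HasStrictFDerivAt F
      ((F' : (E × E) ≃L[ℝ] E × E) : (E × E) →L[ℝ] E × E) (e₀, e₀) :=
    hFat₀.hasStrictFDerivAt' hFd' (by simp)
  set Φ : OpenPartialHomeomorph (E × E) (E × E) := hstrict.toOpenPartialHomeomorph F with hΦdef
  have hΦcoe : ⇑Φ = F := rfl
  have hsrc₀ : ((e₀, e₀) : E × E) ∈ Φ.source := hstrict.mem_toOpenPartialHomeomorph_source
  have htar₀ : ((e₀, e₀) : E × E) ∈ Φ.target := by
    have h := hstrict.image_mem_toOpenPartialHomeomorph_target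
    rwa [hF00] at h
  set G : E × E → E × E := ⇑Φ.symm with hGdef
  have hGq₀ : G (e₀, e₀) = (e₀, e₀) := by
    have h := Φ.left_inv hsrc₀
    rwa [hΦcoe, hF00] at h
  -- invertibility of the derivative of F near (e₀,e₀)
  have hfderivF : ContinuousOn (fderiv ℝ F) S :=
    hFS.continuousOn_fderiv_of_isOpen hSopen (mod_cast le_top)
  set J : E × E → (E × E) →L[ℝ] (E × E) :=
    fun q => ((F'.symm : (E × E) →L[ℝ] E × E).comp (fderiv ℝ F q)) with hJdef
  have hJcont : ContinuousOn J S := continuousOn_const.clm_comp hfderivF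
  have hJ₀ : J (e₀, e₀) = 1 := by
    have h1 : fderiv ℝ F (e₀, e₀) = ((F' : (E × E) ≃L[ℝ] E × E) : (E × E) →L[ℝ] E × E) :=
      hFd'.fderiv
    show (F'.symm : (E × E) →L[ℝ] E × E).comp (fderiv ℝ F (e₀, e₀)) = 1
    rw [h1]
    exact ContinuousLinearMap.ext fun v => by simp
  set N : Set (E × E) := S ∩ J ⁻¹' {A : (E × E) →L[ℝ] (E × E) | IsUnit A} with hNdef
  have hNopen : IsOpen N := hJcont.isOpen_inter_preimage hSopen Units.isOpen
  have hq₀N : ((e₀, e₀) : E × E) ∈ N := ⟨hq₀S, by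
    show IsUnit (J (e₀, e₀))
    rw [hJ₀]
    exact isUnit_one⟩
  -- smoothness of the local inverse G near (e₀, e₀)
  have hGsm : ∀ p ∈ Φ.target ∩ Φ.symm ⁻¹' N, ContDiffAt ℝ (⊤ : ℕ∞) G p := by
    rintro p ⟨hpt, hpN⟩
    have hqS : Φ.symm p ∈ S := hpN.1
    obtain ⟨u, hu⟩ := (hpN.2 : IsUnit (J (Φ.symm p)))
    have hleft : Function.LeftInverse (↑u⁻¹ : (E × E) →L[ℝ] E × E) (↑u : (E × E) →L[ℝ] E × E) := by
      intro v
      calc (↑u⁻¹ : (E × E) →L[ℝ] E × E) ((↑u : (E × E) →L[ℝ] E × E) v)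
          = ((↑u⁻¹ * ↑u : (E × E) →L[ℝ] E × E)) v := rfl
        _ = v := by rw [u.inv_mul]; rfl
    have hright : Function.RightInverse (↑u⁻¹ : (E × E) →L[ℝ] E × E)
        (↑u : (E × E) →L[ℝ] E × E) := by
      intro v
      calc (↑u : (E × E) →L[ℝ] E × E) ((↑u⁻¹ : (E × E) →L[ℝ] E × E) v)
          = ((↑u * ↑u⁻¹ : (E × E) →L[ℝ] E × E)) v := rfl
        _ = v := by rw [u.mul_inv]; rfl
    set eq1 : (E × E) ≃L[ℝ] (E × E) :=
      ContinuousLinearEquiv.equivOfInverse _ _ hleft hright with heq1def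
    set eqq : (E × E) ≃L[ℝ] (E × E) := eq1.trans F' with heqqdef
    have heqq : ((eqq : (E × E) ≃L[ℝ] E × E) : (E × E) →L[ℝ] E × E) = fderiv ℝ F (Φ.symm p) := by
      refine ContinuousLinearMap.ext fun v => ?_
      show F' (eq1 v) = fderiv ℝ F (Φ.symm p) v
      have h2 : eq1 v = J (Φ.symm p) v := by rw [← hu]; rfl
      rw [h2]
      show F' (F'.symm (fderiv ℝ F (Φ.symm p) v)) = _
      exact F'.apply_symm_apply _
    have hFdq : HasFDerivAt F ((eqq : (E × E) ≃L[ℝ] E × E) : (E × E) →L[ℝ] E × E) (Φ.symm p) := by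
      rw [heqq]
      exact ((hFS.differentiableOn (by simp)).differentiableAt
        (hSopen.mem_nhds hqS)).hasFDerivAt
    have hFcq : ContDiffAt ℝ (⊤ : ℕ∞) F (Φ.symm p) := hFS.contDiffAt (hSopen.mem_nhds hqS)
    exact Φ.contDiffAt_symm hpt hFdq hFcq
  set 𝒩 : Set (E × E) := Φ.target ∩ Φ.symm ⁻¹' N with h𝒩def
  have h𝒩open : IsOpen 𝒩 := Φ.isOpen_inter_preimage_symm hNopen
  have hq₀𝒩 : ((e₀, e₀) : E × E) ∈ 𝒩 := ⟨htar₀, by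
    show Φ.symm (e₀, e₀) ∈ N
    rw [show Φ.symm (e₀, e₀) = (e₀, e₀) from hGq₀]
    exact hq₀N⟩
  -- the local inverse function g and the candidate inverse s
  set g : E → E := fun u => (G (u, e₀)).2 with hgdef
  have hge₀ : g e₀ = e₀ := by
    show (G (e₀, e₀)).2 = e₀
    rw [hGq₀]
  set s : M → M := fun x => φ.symm (g (φ x)) with hsdef
  have hs₀ : s x₀ = x₀ := by
    show φ.symm (g (φ x₀)) = x₀
    rw [show g (φ x₀) = e₀ from hge₀, hψe₀]
  have htend : Filter.Tendsto (fun u : E => (u, e₀)) (𝓝 e₀) (𝓝 ((e₀, e₀) : E × E)) :=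
    continuousAt_id.prodMk continuousAt_const
  have hev𝒩 : ∀ᶠ u in 𝓝 e₀, (u, e₀) ∈ 𝒩 := htend (h𝒩open.mem_nhds hq₀𝒩)
  have hgc : ∀ᶠ u in 𝓝 e₀, ContDiffAt ℝ (⊤ : ℕ∞) g u := by
    filter_upwards [hev𝒩] with u hu
    have h1 : ContDiffAt ℝ (⊤ : ℕ∞) G (u, e₀) := hGsm _ hu
    have h2 : ContDiffAt ℝ (⊤ : ℕ∞) (fun w : E => G (w, e₀)) u :=
      ContDiffAt.comp u h1 (contDiffAt_id.prodMk contDiffAt_const)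
    exact ContDiffAt.comp u contDiffAt_snd h2
  have hg0c : ContinuousAt g e₀ := hgc.self_of_nhds.continuousAt
  have hFG : ∀ᶠ u in 𝓝 e₀, F (G (u, e₀)) = (u, e₀) := by
    filter_upwards [htend (Φ.open_target.mem_nhds htar₀)] with u hu
    exact Φ.right_inv hu
  have hG1 : ∀ᶠ u in 𝓝 e₀, G (u, e₀) = (u, g u) := by
    filter_upwards [hFG] with u hu
    have h1 : (G (u, e₀)).1 = u := congrArg Prod.fst hu
    exact Prod.ext h1 rfl
  have hfright : ∀ᶠ u in 𝓝 e₀, f (u, g u) = e₀ := by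
    filter_upwards [hFG, hG1] with u h1 h2
    have h3 : f (G (u, e₀)) = e₀ := congrArg Prod.snd h1
    rwa [h2] at h3
  -- continuity of s at x₀
  have hφc : ContinuousAt φ x₀ := continuousAt_extChartAt x₀
  have hψat' : ContinuousAt φ.symm (g (φ x₀)) := by
    have h := hψat
    rw [show e₀ = g (φ x₀) from hge₀.symm] at h
    exact h
  have hgφ : ContinuousAt g (φ x₀) := hg0c
  have hscont : ContinuousAt s x₀ :=
    ContinuousAt.comp (f := fun x => g (φ x)) hψat' (hgφ.comp hφc)
  have hst : Filter.Tendsto s (𝓝 x₀) (𝓝 x₀) := by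
    have h := hscont.tendsto
    rwa [hs₀] at h
  -- eventual membership facts
  have hevsrc : ∀ᶠ x in 𝓝 x₀, x ∈ (chartAt H x₀).source :=
    (chartAt H x₀).open_source.mem_nhds (mem_chart_source H x₀)
  have hevTg : ∀ᶠ x in 𝓝 x₀, g (φ x) ∈ T := by
    have hc : ContinuousAt (fun x => g (φ x)) x₀ := hgφ.comp hφc
    have h1 : T ∈ 𝓝 (g (φ x₀)) := by
      rw [show g (φ x₀) = e₀ from hge₀]
      exact hTopen.mem_nhds he₀T
    exact hc h1
  have hevgc : ∀ᶠ x in 𝓝 x₀, ContDiffAt ℝ (⊤ : ℕ∞) g (φ x) := hφc hgc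
  have hevsm : ∀ᶠ x in 𝓝 x₀, ContMDiffAt I I (⊤ : ℕ∞) s x := by
    filter_upwards [hevsrc, hevgc, hevTg] with x hx1 hx2 hx3
    have h1 : ContMDiffAt I 𝓘(ℝ, E) (⊤ : ℕ∞) φ x := contMDiffAt_extChartAt' hx1
    have h2 : ContMDiffAt 𝓘(ℝ, E) 𝓘(ℝ, E) (⊤ : ℕ∞) g (φ x) := contMDiffAt_iff_contDiffAt.2 hx2
    have h3 : ContMDiffAt 𝓘(ℝ, E) I (⊤ : ℕ∞) φ.symm (g (φ x)) :=
      (contMDiffOn_extChartAt_symm x₀).contMDiffAt (hTopen.mem_nhds hx3)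
    exact h3.comp x (h2.comp x h1)
  -- right inverse on the manifold
  have hpairt : Filter.Tendsto (fun x => (x, s x)) (𝓝 x₀) (𝓝 (x₀, x₀)) := by
    have hc := (continuousAt_id.prodMk hscont).tendsto
    rwa [hs₀] at hc
  have hevUx : ∀ᶠ x in 𝓝 x₀, (x, s x) ∈ U := hpairt hU
  have hμc : ContinuousAt μ (x₀, x₀) := hμ.continuousOn.continuousAt hU
  have hμt : Filter.Tendsto μ (𝓝 (x₀, x₀)) (𝓝 x₀) := by
    have h := hμc.tendsto
    rwa [hμ₀] at h
  have hevμsrc : ∀ᶠ x in 𝓝 x₀, μ (x, s x) ∈ (chartAt H x₀).source :=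
    (hμt.comp hpairt) ((chartAt H x₀).open_source.mem_nhds (mem_chart_source H x₀))
  have hevfright : ∀ᶠ x in 𝓝 x₀, f (φ x, g (φ x)) = e₀ := hφc hfright
  have hevright : ∀ᶠ x in 𝓝 x₀, μ (x, s x) = x₀ := by
    filter_upwards [hevsrc, hevμsrc, hevfright] with x h1 h2 h3
    have hxsrc : x ∈ φ.source := by rw [hφdef, extChartAt_source]; exact h1
    have h5 : φ.symm (φ x) = x := φ.left_inv hxsrc
    have h7 : f (φ x, g (φ x)) = φ (μ (φ.symm (φ x), s x)) := rfl
    rw [h7, h5] at h3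
    have h8 : μ (x, s x) ∈ φ.source := by rw [hφdef, extChartAt_source]; exact h2
    have h9 := φ.left_inv h8
    rw [h3, hψe₀] at h9
    exact h9.symm
  -- product neighbourhoods for the associativity argument
  obtain ⟨A, hA, B, hB, hAB⟩ := mem_nhds_prod_iff.1 hU
  set W₀ : Set M := A ∩ B with hW₀def
  have hW₀ : W₀ ∈ 𝓝 x₀ := inter_mem hA hB
  have hW₀U : ∀ a b : M, a ∈ W₀ → b ∈ W₀ → (a, b) ∈ U := fun a b ha hb => hAB ⟨ha.1, hb.2⟩
  have hx₀W₀ : x₀ ∈ W₀ := mem_of_mem_nhds hW₀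
  have hμW₀ : {p : M × M | μ p ∈ W₀} ∈ 𝓝 (x₀, x₀) := hμt hW₀
  obtain ⟨A', hA', B', hB', hAB'⟩ := mem_nhds_prod_iff.1 hμW₀
  set W : Set M := W₀ ∩ (A' ∩ B') with hWdef
  have hW : W ∈ 𝓝 x₀ := inter_mem hW₀ (inter_mem hA' hB')
  have hWW₀ : W ⊆ W₀ := inter_subset_left
  have hμWW : ∀ a b : M, a ∈ W → b ∈ W → μ (a, b) ∈ W₀ := fun a b ha hb => hAB' ⟨ha.2.1, hb.2.2⟩
  have hevW : ∀ᶠ x in 𝓝 x₀, x ∈ W := hW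
  have hevsW : ∀ᶠ x in 𝓝 x₀, s x ∈ W := hst hW
  have hevssW : ∀ᶠ x in 𝓝 x₀, s (s x) ∈ W := (hst.comp hst) hW
  have hevsR : ∀ᶠ x in 𝓝 x₀, μ (s x, s (s x)) = x₀ := hst hevright
  -- all conditions together
  have hfinal : ∀ᶠ x in 𝓝 x₀, ContMDiffAt I I (⊤ : ℕ∞) s x ∧
      ((s x, x) ∈ U ∧ (x, s x) ∈ U ∧ μ (s x, x) = x₀ ∧ μ (x, s x) = x₀) := by
    filter_upwards [hevsm, hevright, hevUx, hevW, hevsW, hevssW, hevsR] with x hsm hr hxU hxW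
      hsxW hssxW hsr
    have hbaU : (s x, x) ∈ U := hW₀U _ _ (hWW₀ hsxW) (hWW₀ hxW)
    have hbaW₀ : μ (s x, x) ∈ W₀ := hμWW _ _ hsxW hxW
    have step1 : μ (μ (s x, x), s x) = s x := by
      have h1 := hassoc (s x) x (s x) hbaU hxU (hW₀U _ _ hbaW₀ (hWW₀ hsxW))
        (by rw [hr]; exact hW₀U _ _ (hWW₀ hsxW) hx₀W₀)
      rw [hr] at h1
      rw [h1]
      exact hunitr (s x) (hW₀U _ _ (hWW₀ hsxW) hx₀W₀)
    have step2 : μ (s x, x) = x₀ := by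
      have h2 := hassoc (μ (s x, x)) (s x) (s (s x)) (hW₀U _ _ hbaW₀ (hWW₀ hsxW))
        (hW₀U _ _ (hWW₀ hsxW) (hWW₀ hssxW))
        (by rw [step1]; exact hW₀U _ _ (hWW₀ hsxW) (hWW₀ hssxW))
        (by rw [hsr]; exact hW₀U _ _ hbaW₀ hx₀W₀)
      rw [step1, hsr] at h2
      have h3 : μ (μ (s x, x), x₀) = μ (s x, x) := hunitr _ (hW₀U _ _ hbaW₀ hx₀W₀)
      rw [h3] at h2
      exact h2.symm
    exact ⟨hsm, hbaU, hxU, step2, hr⟩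
  exact ⟨{x | ContMDiffAt I I (⊤ : ℕ∞) s x ∧
      ((s x, x) ∈ U ∧ (x, s x) ∈ U ∧ μ (s x, x) = x₀ ∧ μ (x, s x) = x₀)}, hfinal, s,
    fun x hx => hx.1.contMDiffWithinAt, fun x hx => hx.2⟩
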